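/- For Λ ≥ 2 and integer M ≥ 1, the collection E = {R_1, …, R_M} with R_m = [0,1) ∪ [m, m+(Λ−1)^{-1}) ⊆ ℝ is Λ^{-1}-sparse with respect to Lebesgue measure: the pairwise-disjoint sets E(R_m) = [m, m+(Λ−1)^{-1}) satisfy |E(R_m)| = Λ^{-1} |R_m|. In particular ‖E‖_{Carleson} ≤ Λ. -/

import Mathlib

open MeasureTheory Set
open scoped ENNReal

theorem stmt11 (Λ : ℝ) (hΛ : 2 ≤ Λ) (M : ℕ) (hM : 1 ≤ M) :
    let R : Fin M → Set ℝ := fun m =>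
      Set.Ico (0 : ℝ) 1 ∪ Set.Ico ((m : ℝ) + 1) ((m : ℝ) + 1 + (Λ - 1)⁻¹)
    let Esel : Fin M → Set ℝ := fun m =>
      Set.Ico ((m : ℝ) + 1) ((m : ℝ) + 1 + (Λ - 1)⁻¹)
    (∀ m, Esel m ⊆ R m) ∧
    (Set.univ.PairwiseDisjoint Esel) ∧
    (∀ m, volume (Esel m) = (ENNReal.ofReal Λ)⁻¹ * volume (R m)) ∧
    (∀ F : Finset (Fin M),
      ∑ m ∈ F, volume (R m) ≤ ENNReal.ofReal Λ * volume (⋃ m ∈ F, R m)) := by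
  intro R Esel
  have hΛ0 : (0:ℝ) < Λ := by linarith
  have h1 : (0:ℝ) < Λ - 1 := by linarith
  have hc : (0:ℝ) < (Λ - 1)⁻¹ := inv_pos.2 h1
  have hc1 : (Λ - 1)⁻¹ ≤ 1 := by
    rw [inv_le_one_iff₀]; right; linarith
  -- pairwise disjointness of Esel
  have hpd : Set.univ.PairwiseDisjoint Esel := by
    intro m _ n _ hmn
    have key : ∀ a b : Fin M, (a : ℝ) < (b : ℝ) →
        Disjoint (Esel a) (Esel b) := by
      intro a b hab
      have : (a : ℝ) + 1 ≤ (b : ℝ) := by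
        have : (a : ℕ) < (b : ℕ) := by exact_mod_cast hab
        have : (a : ℕ) + 1 ≤ (b : ℕ) := this
        exact_mod_cast this
      simp only [Esel, Set.Ico_disjoint_Ico]
      rw [min_le_iff, le_max_iff]
      left; right; linarith
    rcases lt_or_gt_of_ne (fun h : (m : ℝ) = (n : ℝ) => hmn (by
      exact_mod_cast Fin.ext (by exact_mod_cast h))) with h | h
    · exact key m n h
    · exact (key n m h).symm
  -- disjointness of the two pieces of R m
  have hdisj : ∀ m : Fin M, Disjoint (Set.Ico (0:ℝ) 1) (Esel m) := by
    intro m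
    simp only [Esel, Set.Ico_disjoint_Ico]
    rw [min_le_iff, le_max_iff]
    left; right
    have : (0:ℝ) ≤ (m : ℝ) := Nat.cast_nonneg _
    linarith
  have hvolE : ∀ m : Fin M, volume (Esel m) = ENNReal.ofReal ((Λ - 1)⁻¹) := by
    intro m
    simp only [Esel, Real.volume_Ico]
    ring_nf
  have hvolR : ∀ m : Fin M, volume (R m) = ENNReal.ofReal (1 + (Λ - 1)⁻¹) := by
    intro m
    have : volume (R m) = volume (Set.Ico (0:ℝ) 1) + volume (Esel m) :=
      measure_union (hdisj m) measurableSet_Ico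
    rw [this, hvolE, Real.volume_Ico, ← ENNReal.ofReal_add (by norm_num) hc.le]
    norm_num
  refine ⟨fun m => Set.subset_union_right, hpd, ?_, ?_⟩
  · intro m
    rw [hvolE, hvolR, ← ENNReal.ofReal_inv_of_pos hΛ0,
      ← ENNReal.ofReal_mul (inv_nonneg.2 hΛ0.le)]
    congr 1
    field_simp
    ring
  · intro F
    have hsum : ∑ m ∈ F, volume (R m) = F.card * ENNReal.ofReal (1 + (Λ - 1)⁻¹) := by
      rw [Finset.sum_congr rfl (fun m _ => hvolR m)]
      simp [mul_comm]
    have hunion : volume (⋃ m ∈ F, Esel m) = F.card * ENNReal.ofReal ((Λ - 1)⁻¹) := by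
      rw [measure_biUnion_finset (hpd.subset (Set.subset_univ _))
        (fun m _ => measurableSet_Ico)]
      rw [Finset.sum_congr rfl (fun m _ => hvolE m)]
      simp [mul_comm]
    have hsub : volume (⋃ m ∈ F, Esel m) ≤ volume (⋃ m ∈ F, R m) :=
      measure_mono (Set.iUnion₂_mono fun m _ => Set.subset_union_right)
    calc ∑ m ∈ F, volume (R m) = F.card * ENNReal.ofReal (1 + (Λ - 1)⁻¹) := hsum
      _ = ENNReal.ofReal Λ * (F.card * ENNReal.ofReal ((Λ - 1)⁻¹)) := by
          rw [← mul_assoc, mul_comm (ENNReal.ofReal Λ) (F.card : ℝ≥0∞), mul_assoc,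
            ← ENNReal.ofReal_mul hΛ0.le]
          congr 2
          field_simp
          ring
      _ = ENNReal.ofReal Λ * volume (⋃ m ∈ F, Esel m) := by rw [hunion]
      _ ≤ ENNReal.ofReal Λ * volume (⋃ m ∈ F, R m) := by
          exact mul_le_mul_right hsub _
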